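/- Suppose at step k of the BFGS method that s_k ≠ 0, τ_k < 1, and ‖Ĥ_k − I‖_F ≤ δ for some δ > 0. Then the BFGS update satisfies ‖Ĥ_{k+1} − I‖_F ≤ ‖Ĥ_k − I‖_F − ‖(Ĥ_k − I)ŷ_k‖²/(2δ‖ŷ_k‖²) + V_k·τ_k, where V_k = ‖Ĥ_k‖·4/(1 − τ_k) + ‖Ĥ_k‖·4(1 + τ_k)²τ_k/(1 − τ_k)² + (3 + 2τ_k)/(1 − τ_k). -/

import Mathlib

noncomputable section

open Matrix Finset

abbrev E (d : ℕ) := EuclideanSpace ℝ (Fin d)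
abbrev Mat (d : ℕ) := Matrix (Fin d) (Fin d) ℝ

/-- Spectral (operator 2-) norm of a real matrix. -/
def spec {d : ℕ} (A : Mat d) : ℝ := ‖Matrix.toEuclideanCLM (𝕜 := ℝ) A‖

/-- Frobenius norm of a real matrix. -/
def frob {d : ℕ} (A : Mat d) : ℝ := Real.sqrt (∑ i, ∑ j, (A i j) ^ 2)

/-- A matrix acting on a Euclidean vector. -/
def mApp {d : ℕ} (A : Mat d) (v : E d) : E d := Matrix.toEuclideanCLM (𝕜 := ℝ) A v

/-- Outer product `u vᵀ`. -/
def outer {d : ℕ} (u v : E d) : Mat d := Matrix.of fun i j => u i * v j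

/-- Euclidean dot product. -/
def dot {d : ℕ} (u v : E d) : ℝ := ∑ i, u i * v i

/-- `σ(x) = (M/μ^{3/2})·‖H_*^{1/2}(x − x_*)‖`. -/
def sig {d : ℕ} (M μ : ℝ) (sqH : Mat d) (xs x : E d) : ℝ :=
  M / μ ^ ((3:ℝ)/2) * ‖mApp sqH (x - xs)‖

/-- `τ = max{σ(x), σ(x')}`. -/
def tauP {d : ℕ} (M μ : ℝ) (sqH : Mat d) (xs x x' : E d) : ℝ :=
  max (sig M μ sqH xs x) (sig M μ sqH xs x')

/-- The BFGS update of the inverse Hessian approximation. -/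
def bfgsUpdate {d : ℕ} (H : Mat d) (s y : E d) : Mat d :=
  (1 - (dot y s)⁻¹ • outer s y) * H * (1 - (dot s y)⁻¹ • outer y s)
    + (dot y s)⁻¹ • outer s s

namespace BFGSAux
variable {d : ℕ}

theorem mApp_apply (A : Mat d) (v : E d) (i : Fin d) : mApp A v i = ∑ j, A i j * v j := rfl

theorem mApp_mul (A B : Mat d) (v : E d) : mApp (A * B) v = mApp A (mApp B v) := by
  simp only [mApp, _root_.map_mul]; rfl

theorem mApp_one (v : E d) : mApp 1 v = v := by simp [mApp]

theorem mApp_sub (A B : Mat d) (v : E d) : mApp (A - B) v = mApp A v - mApp B v := by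
  simp [mApp]

theorem mApp_add (A B : Mat d) (v : E d) : mApp (A + B) v = mApp A v + mApp B v := by
  simp [mApp]

theorem mApp_vadd (A : Mat d) (u v : E d) : mApp A (u + v) = mApp A u + mApp A v := by
  simp [mApp]

theorem mApp_vsub (A : Mat d) (u v : E d) : mApp A (u - v) = mApp A u - mApp A v := by
  simp [mApp]

theorem mApp_vsmul (A : Mat d) (r : ℝ) (v : E d) : mApp A (r • v) = r • mApp A v := by
  simp [mApp]

theorem norm_mApp_le (A : Mat d) (v : E d) : ‖mApp A v‖ ≤ spec A * ‖v‖ :=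
  (Matrix.toEuclideanCLM (𝕜 := ℝ) A).le_opNorm v

theorem spec_nonneg (A : Mat d) : 0 ≤ spec A := norm_nonneg _

theorem spec_mul_le (A B : Mat d) : spec (A * B) ≤ spec A * spec B := by
  simp only [spec, _root_.map_mul]; exact norm_mul_le _ _

theorem transpose_eq_conjTranspose (A : Mat d) : Aᵀ = Aᴴ := by
  ext i j; simp [Matrix.conjTranspose_apply]

theorem dot_mApp_left' (A : Mat d) (u v : E d) : dot (mApp A u) v = dot u (mApp Aᵀ v) := by
  simp only [dot, mApp_apply, Finset.sum_mul, Finset.mul_sum, Matrix.transpose_apply]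
  rw [Finset.sum_comm]
  exact Finset.sum_congr rfl fun i _ => Finset.sum_congr rfl fun j _ => by ring

theorem dot_comm (u v : E d) : dot u v = dot v u := by
  simp [dot, mul_comm]

theorem norm_sq_eq_dot (v : E d) : ‖v‖ ^ 2 = dot v v := by
  rw [EuclideanSpace.norm_eq, Real.sq_sqrt (by positivity)]
  simp [dot, sq]

theorem dot_self_nonneg (v : E d) : 0 ≤ dot v v := by
  rw [← norm_sq_eq_dot]; positivity

theorem norm_eq_sqrt_dot (v : E d) : ‖v‖ = Real.sqrt (dot v v) := by
  rw [← norm_sq_eq_dot, Real.sqrt_sq (norm_nonneg _)]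

theorem dot_cs (u v : E d) : dot u v ^ 2 ≤ dot u u * dot v v := by
  simpa [dot, sq] using Finset.sum_mul_sq_le_sq_mul_sq Finset.univ (fun i => u i) (fun i => v i)

theorem abs_dot_le (u v : E d) : |dot u v| ≤ ‖u‖ * ‖v‖ := by
  have h := dot_cs u v
  have h2 : |dot u v| = Real.sqrt (dot u v ^ 2) := by
    rw [Real.sqrt_sq_eq_abs]
  rw [h2, norm_eq_sqrt_dot, norm_eq_sqrt_dot, ← Real.sqrt_mul (dot_self_nonneg u)]
  exact Real.sqrt_le_sqrt h

theorem dot_le_norm_mul (u v : E d) : dot u v ≤ ‖u‖ * ‖v‖ :=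
  (le_abs_self _).trans (abs_dot_le u v)

theorem dot_mApp_left (A : Mat d) (u v : E d) : dot (mApp A u) v = dot u (mApp Aᵀ v) := by
  simp only [dot, mApp_apply, Finset.sum_mul, Finset.mul_sum, Matrix.transpose_apply]
  rw [Finset.sum_comm]
  exact Finset.sum_congr rfl fun i _ => Finset.sum_congr rfl fun j _ => by ring

theorem dot_mApp_right (A : Mat d) (u v : E d) : dot u (mApp A v) = dot (mApp Aᵀ u) v := by
  rw [dot_mApp_left, Matrix.transpose_transpose]

-- dot bilinearity
theorem dot_add_left (u v w : E d) : dot (u + v) w = dot u w + dot v w := by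
  simp [dot, add_mul, Finset.sum_add_distrib]

theorem dot_sub_left (u v w : E d) : dot (u - v) w = dot u w - dot v w := by
  simp [dot, sub_mul, Finset.sum_sub_distrib]

theorem dot_add_right (u v w : E d) : dot u (v + w) = dot u v + dot u w := by
  simp [dot, mul_add, Finset.sum_add_distrib]

theorem dot_sub_right (u v w : E d) : dot u (v - w) = dot u v - dot u w := by
  simp [dot, mul_sub, Finset.sum_sub_distrib]

theorem dot_smul_left (r : ℝ) (u w : E d) : dot (r • u) w = r * dot u w := by
  simp [dot, Finset.mul_sum, mul_assoc]

theorem dot_smul_right (r : ℝ) (u w : E d) : dot u (r • w) = r * dot u w := by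
  simp [dot, Finset.mul_sum]
  exact Finset.sum_congr rfl fun i _ => by ring

theorem dot_zero_left (w : E d) : dot (0 : E d) w = 0 := by simp [dot]

theorem spec_transpose_le (A : Mat d) : spec Aᵀ ≤ spec A := by
  apply ContinuousLinearMap.opNorm_le_bound _ (spec_nonneg A)
  intro v
  show ‖mApp Aᵀ v‖ ≤ spec A * ‖v‖
  set u := mApp Aᵀ v with hu
  have h2 : ‖u‖ ^ 2 ≤ spec A * ‖v‖ * ‖u‖ := by
    rw [norm_sq_eq_dot]
    have : dot u (mApp Aᵀ v) = dot (mApp A u) v := by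
      rw [dot_mApp_right, Matrix.transpose_transpose]
    rw [hu]
    rw [this]
    calc dot (mApp A u) v ≤ ‖mApp A u‖ * ‖v‖ := dot_le_norm_mul _ _
      _ ≤ spec A * ‖u‖ * ‖v‖ := by
          have := norm_mApp_le A u
          have hv : (0:ℝ) ≤ ‖v‖ := norm_nonneg _
          nlinarith [norm_nonneg (mApp A u)]
      _ = spec A * ‖v‖ * ‖u‖ := by ring
  rcases eq_or_lt_of_le (norm_nonneg u) with h0 | h0
  · rw [← h0]; exact mul_nonneg (spec_nonneg A) (norm_nonneg v)
  · nlinarith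

theorem spec_transpose (A : Mat d) : spec Aᵀ = spec A :=
  le_antisymm (spec_transpose_le A)
    (by simpa using spec_transpose_le Aᵀ)

end BFGSAux
namespace BFGSAux
variable {d : ℕ}

/-- Frobenius inner product. -/
def finp {d : ℕ} (X Y : Mat d) : ℝ := ∑ i, ∑ j, X i j * Y i j

theorem frob_eq_sqrt_finp (X : Mat d) : frob X = Real.sqrt (finp X X) := by
  simp [frob, finp, sq]

theorem finp_self_nonneg (X : Mat d) : 0 ≤ finp X X := by
  apply Finset.sum_nonneg; intro i _; apply Finset.sum_nonneg; intro j _; exact mul_self_nonneg _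

theorem frob_nonneg (X : Mat d) : 0 ≤ frob X := Real.sqrt_nonneg _

theorem frob_sq (X : Mat d) : frob X ^ 2 = finp X X := by
  rw [frob_eq_sqrt_finp, Real.sq_sqrt (finp_self_nonneg X)]

theorem finp_comm (X Y : Mat d) : finp X Y = finp Y X := by
  simp [finp, mul_comm]

theorem finp_add_left (X Y Z : Mat d) : finp (X + Y) Z = finp X Z + finp Y Z := by
  simp [finp, Matrix.add_apply, add_mul, Finset.sum_add_distrib]

theorem finp_sub_left (X Y Z : Mat d) : finp (X - Y) Z = finp X Z - finp Y Z := by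
  simp [finp, Matrix.sub_apply, sub_mul, Finset.sum_sub_distrib]

theorem finp_add_right (X Y Z : Mat d) : finp X (Y + Z) = finp X Y + finp X Z := by
  rw [finp_comm, finp_add_left, finp_comm Y X, finp_comm Z X]

theorem finp_sub_right (X Y Z : Mat d) : finp X (Y - Z) = finp X Y - finp X Z := by
  rw [finp_comm, finp_sub_left, finp_comm Y X, finp_comm Z X]

theorem finp_smul_left (r : ℝ) (X Z : Mat d) : finp (r • X) Z = r * finp X Z := by
  simp [finp, Matrix.smul_apply, Finset.mul_sum, smul_eq_mul, mul_assoc]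

theorem finp_smul_right (r : ℝ) (X Z : Mat d) : finp X (r • Z) = r * finp X Z := by
  rw [finp_comm, finp_smul_left, finp_comm]

theorem finp_neg_left (X Z : Mat d) : finp (-X) Z = - finp X Z := by
  simp [finp, Finset.sum_neg_distrib]

theorem outer_apply (u v : E d) (i j : Fin d) : outer u v i j = u i * v j := rfl

theorem finp_outer_outer (a b c e : E d) :
    finp (outer a b) (outer c e) = dot a c * dot b e := by
  rw [dot, dot, Finset.sum_mul_sum]
  simp only [finp, outer_apply]
  exact Finset.sum_congr rfl fun i _ => Finset.sum_congr rfl fun j _ => by ring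

theorem finp_outer_right (B : Mat d) (a b : E d) :
    finp B (outer a b) = dot a (mApp B b) := by
  simp only [finp, outer_apply, dot, mApp_apply, Finset.mul_sum]
  exact Finset.sum_congr rfl fun i _ => Finset.sum_congr rfl fun j _ => by ring

theorem finp_le_frob_mul_frob (X Y : Mat d) : finp X Y ≤ frob X * frob Y := by
  have h : finp X Y ^ 2 ≤ finp X X * finp Y Y := by
    have := Finset.sum_mul_sq_le_sq_mul_sq (Finset.univ : Finset (Fin d × Fin d))
      (fun p => X p.1 p.2) (fun p => Y p.1 p.2)
    simpa [finp, sq, Fintype.sum_prod_type] using this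
  have h2 : |finp X Y| ≤ frob X * frob Y := by
    rw [← Real.sqrt_sq_eq_abs, frob_eq_sqrt_finp, frob_eq_sqrt_finp,
      ← Real.sqrt_mul (finp_self_nonneg X)]
    exact Real.sqrt_le_sqrt h
  exact (le_abs_self _).trans h2

theorem frob_triangle (X Y : Mat d) : frob (X + Y) ≤ frob X + frob Y := by
  have h : finp (X + Y) (X + Y) ≤ (frob X + frob Y) ^ 2 := by
    rw [finp_add_left, finp_add_right, finp_add_right]
    have h1 := finp_le_frob_mul_frob X Y
    have h2 := finp_le_frob_mul_frob Y X
    nlinarith [frob_sq X, frob_sq Y]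
  calc frob (X + Y) = Real.sqrt (finp (X + Y) (X + Y)) := frob_eq_sqrt_finp _
    _ ≤ Real.sqrt ((frob X + frob Y) ^ 2) := Real.sqrt_le_sqrt h
    _ = frob X + frob Y := by
        rw [Real.sqrt_sq (add_nonneg (frob_nonneg X) (frob_nonneg Y))]

theorem frob_transpose (X : Mat d) : frob Xᵀ = frob X := by
  simp only [frob, Matrix.transpose_apply]
  rw [Finset.sum_comm]

theorem frob_smul (r : ℝ) (X : Mat d) : frob (r • X) = |r| * frob X := by
  simp only [frob, Matrix.smul_apply, smul_eq_mul, mul_pow, ← Finset.mul_sum]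
  rw [Real.sqrt_mul (sq_nonneg r), Real.sqrt_sq_eq_abs]

theorem frob_neg (X : Mat d) : frob (-X) = frob X := by
  simp [frob]

theorem frob_outer (a b : E d) : frob (outer a b) = ‖a‖ * ‖b‖ := by
  rw [frob_eq_sqrt_finp, finp_outer_outer, norm_eq_sqrt_dot, norm_eq_sqrt_dot,
    ← Real.sqrt_mul (dot_self_nonneg a)]

theorem norm_mApp_le_frob (A : Mat d) (v : E d) : ‖mApp A v‖ ≤ frob A * ‖v‖ := by
  have h : ‖mApp A v‖ ^ 2 ≤ (frob A * ‖v‖) ^ 2 := by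
    rw [norm_sq_eq_dot]
    have hrow : ∀ i : Fin d, (∑ j, A i j * v j) ^ 2 ≤ (∑ j, (A i j)^2) * (∑ j, (v j)^2) :=
      fun i => Finset.sum_mul_sq_le_sq_mul_sq Finset.univ _ _
    calc dot (mApp A v) (mApp A v) = ∑ i, (∑ j, A i j * v j) ^ 2 := by
          simp [dot, mApp_apply, sq]
      _ ≤ ∑ i, (∑ j, (A i j)^2) * (∑ j, (v j)^2) := Finset.sum_le_sum fun i _ => hrow i
      _ = (∑ i, ∑ j, (A i j)^2) * (∑ j, (v j)^2) := by rw [Finset.sum_mul]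
      _ = (frob A * ‖v‖)^2 := by
          rw [mul_pow, frob, Real.sq_sqrt (by positivity), norm_sq_eq_dot]
          congr 1
          simp [dot, sq]
  have h1 : (0:ℝ) ≤ frob A * ‖v‖ := mul_nonneg (frob_nonneg A) (norm_nonneg v)
  nlinarith [norm_nonneg (mApp A v)]

theorem spec_le_frob (A : Mat d) : spec A ≤ frob A := by
  apply ContinuousLinearMap.opNorm_le_bound _ (frob_nonneg A)
  intro v
  exact norm_mApp_le_frob A v

/-- Column of a matrix as a Euclidean vector. -/
def colE {d : ℕ} (B : Mat d) (j : Fin d) : E d := (WithLp.equiv 2 (Fin d → ℝ)).symm (fun i => B i j)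

theorem colE_apply (B : Mat d) (j i : Fin d) : colE B j i = B i j := rfl

theorem frob_mul_le_left (A B : Mat d) : frob (A * B) ≤ spec A * frob B := by
  have key : finp (A * B) (A * B) ≤ (spec A * frob B) ^ 2 := by
    have e1 : finp (A * B) (A * B) = ∑ j, dot (mApp A (colE B j)) (mApp A (colE B j)) := by
      simp only [finp, dot, mApp_apply, Matrix.mul_apply, colE_apply]
      rw [Finset.sum_comm]
    have e2 : ∀ j, dot (mApp A (colE B j)) (mApp A (colE B j))
        ≤ spec A ^ 2 * dot (colE B j) (colE B j) := by
      intro j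
      have h1 := norm_mApp_le A (colE B j)
      have h2 : ‖mApp A (colE B j)‖ ^ 2 ≤ (spec A * ‖colE B j‖) ^ 2 := by
        have := norm_nonneg (mApp A (colE B j))
        nlinarith [norm_nonneg (colE B j), spec_nonneg A]
      rw [norm_sq_eq_dot] at h2
      calc dot (mApp A (colE B j)) (mApp A (colE B j)) ≤ (spec A * ‖colE B j‖)^2 := h2
        _ = spec A ^ 2 * dot (colE B j) (colE B j) := by rw [mul_pow, norm_sq_eq_dot]
    have e3 : ∑ j, dot (colE B j) (colE B j) = finp B B := by
      simp only [dot, colE_apply, finp, ← sq]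
      rw [Finset.sum_comm]
    calc finp (A * B) (A * B) = ∑ j, dot (mApp A (colE B j)) (mApp A (colE B j)) := e1
      _ ≤ ∑ j, spec A ^ 2 * dot (colE B j) (colE B j) := Finset.sum_le_sum fun j _ => e2 j
      _ = spec A ^ 2 * finp B B := by rw [← Finset.mul_sum, e3]
      _ = (spec A * frob B) ^ 2 := by rw [mul_pow, frob_sq]
  calc frob (A * B) = Real.sqrt (finp (A * B) (A * B)) := frob_eq_sqrt_finp _
    _ ≤ Real.sqrt ((spec A * frob B) ^ 2) := Real.sqrt_le_sqrt key
    _ = spec A * frob B := by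
        rw [Real.sqrt_sq (mul_nonneg (spec_nonneg A) (frob_nonneg B))]

theorem frob_mul_le_right (A B : Mat d) : frob (A * B) ≤ frob A * spec B := by
  calc frob (A * B) = frob ((A * B)ᵀ) := (frob_transpose _).symm
    _ = frob (Bᵀ * Aᵀ) := by rw [Matrix.transpose_mul]
    _ ≤ spec Bᵀ * frob Aᵀ := frob_mul_le_left _ _
    _ = frob A * spec B := by rw [spec_transpose, frob_transpose]; ring

end BFGSAux
namespace BFGSAux
variable {d : ℕ}

theorem mul_outer (A : Mat d) (u v : E d) : A * outer u v = outer (mApp A u) v := by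
  ext i j
  simp only [Matrix.mul_apply, outer_apply, mApp_apply, Finset.sum_mul]
  exact Finset.sum_congr rfl fun k _ => by ring

theorem outer_mul (A : Mat d) (u v : E d) : outer u v * A = outer u (mApp Aᵀ v) := by
  ext i j
  simp only [Matrix.mul_apply, outer_apply, mApp_apply, Finset.mul_sum, Matrix.transpose_apply]
  exact Finset.sum_congr rfl fun k _ => by ring

theorem outer_mul_outer (a b c e : E d) : outer a b * outer c e = dot b c • outer a e := by
  ext i j
  simp only [Matrix.mul_apply, outer_apply, Matrix.smul_apply, dot, smul_eq_mul, Finset.sum_mul]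
  exact Finset.sum_congr rfl fun k _ => by ring

theorem outer_add_left (u v w : E d) : outer (u + v) w = outer u w + outer v w := by
  ext i j; simp [outer_apply, add_mul]

theorem outer_sub_left (u v w : E d) : outer (u - v) w = outer u w - outer v w := by
  ext i j; simp [outer_apply, sub_mul]

theorem outer_add_right (u v w : E d) : outer u (v + w) = outer u v + outer u w := by
  ext i j; simp [outer_apply, mul_add]

theorem outer_sub_right (u v w : E d) : outer u (v - w) = outer u v - outer u w := by
  ext i j; simp [outer_apply, mul_sub]

theorem outer_smul_left (r : ℝ) (u w : E d) : outer (r • u) w = r • outer u w := by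
  ext i j; simp [outer_apply, mul_assoc]

theorem outer_smul_right (r : ℝ) (u w : E d) : outer u (r • w) = r • outer u w := by
  ext i j; simp [outer_apply]; ring

theorem mApp_outer (a b v : E d) : mApp (outer a b) v = dot b v • a := by
  ext i
  simp only [mApp_apply, outer_apply, dot, PiLp.smul_apply, smul_eq_mul, Finset.sum_mul]
  exact Finset.sum_congr rfl fun k _ => by ring

end BFGSAux
namespace BFGSAux
variable {d : ℕ}

theorem mApp_smulM (r : ℝ) (A : Mat d) (v : E d) : mApp (r • A) v = r • mApp A v := by
  simp [mApp]

set_option maxHeartbeats 1000000 in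
theorem bfgs_identity (Hh : Mat d) (hsym : Hhᵀ = Hh) (sh yh : E d)
    (hc : dot yh sh ≠ 0) (hn : dot yh yh ≠ 0) :
    bfgsUpdate Hh sh yh - 1 =
      ((Hh - 1) - (dot yh yh)⁻¹ • outer yh (mApp (Hh - 1) yh)
        - (dot yh yh)⁻¹ • outer (mApp (Hh - 1) yh) yh
        + (dot yh (mApp (Hh - 1) yh) * (dot yh yh)⁻¹ * (dot yh yh)⁻¹) • outer yh yh)
      + (-((1 - (dot yh yh)⁻¹ • outer yh yh) * Hh *
            ((dot yh sh)⁻¹ • outer yh sh - (dot yh yh)⁻¹ • outer yh yh))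
         - ((dot yh sh)⁻¹ • outer sh yh - (dot yh yh)⁻¹ • outer yh yh) * Hh *
            (1 - (dot yh yh)⁻¹ • outer yh yh)
         + ((dot yh sh)⁻¹ • outer sh yh - (dot yh yh)⁻¹ • outer yh yh) * Hh *
            ((dot yh sh)⁻¹ • outer yh sh - (dot yh yh)⁻¹ • outer yh yh))
      + ((dot yh sh)⁻¹ • outer sh sh - (dot yh yh)⁻¹ • outer yh yh) := by
  set n : ℝ := dot yh yh with hn'
  set c : ℝ := dot yh sh with hc'
  set w : E d := mApp (Hh - 1) yh with hw
  set lam : ℝ := dot yh w with hlam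
  set P : Mat d := n⁻¹ • outer yh yh with hP
  set R : Mat d := c⁻¹ • outer sh yh - P with hR
  set R' : Mat d := c⁻¹ • outer yh sh - P with hR'
  have hHyh : mApp Hh yh = w + yh := by
    rw [hw, mApp_sub, mApp_one]; abel
  have hPH : P * Hh = n⁻¹ • outer yh w + P := by
    rw [hP, Matrix.smul_mul, outer_mul, hsym, hHyh, outer_add_right, smul_add]
  have hHP : Hh * P = n⁻¹ • outer w yh + P := by
    rw [hP, Matrix.mul_smul, mul_outer, hHyh, outer_add_left, smul_add]
  have hPP : P * P = P := by
    rw [hP, Matrix.smul_mul, Matrix.mul_smul, outer_mul_outer, ← hn', smul_smul, smul_smul]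
    congr 1
    field_simp
  have hPHP : P * Hh * P = (lam * n⁻¹ * n⁻¹) • outer yh yh + P := by
    rw [hPH, Matrix.add_mul, hPP, hP, Matrix.smul_mul, Matrix.mul_smul, outer_mul_outer]
    rw [dot_comm w yh, ← hlam, smul_smul, smul_smul]
    ring_nf
  have hQ : c⁻¹ • outer sh yh = P + R := by rw [hR]; abel
  have hQ' : (dot sh yh)⁻¹ • outer yh sh = P + R' := by
    rw [dot_comm sh yh, ← hc', hR']; abel
  have expand1 : (1 - (P + R)) * Hh * (1 - (P + R')) =
      (1 - P) * Hh * (1 - P) - (1 - P) * Hh * R' - R * Hh * (1 - P) + R * Hh * R' := by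
    noncomm_ring
  have expand2 : (1 - P) * Hh * (1 - P) = Hh - P * Hh - Hh * P + P * Hh * P := by
    noncomm_ring
  rw [bfgsUpdate, ← hc', hQ, hQ', expand1, expand2, hPHP, hPH, hHP]

  abel

end BFGSAux
namespace BFGSAux
variable {d : ℕ}

theorem dot_self_pos (yh : E d) (hyh : yh ≠ 0) : 0 < dot yh yh := by
  have h : 0 < ‖yh‖ := norm_pos_iff.mpr hyh
  nlinarith [norm_sq_eq_dot yh]

theorem spec_proj_le_one (yh : E d) (hyh : yh ≠ 0) :
    spec (1 - (dot yh yh)⁻¹ • outer yh yh) ≤ 1 := by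
  have hn : 0 < dot yh yh := dot_self_pos yh hyh
  apply ContinuousLinearMap.opNorm_le_bound _ zero_le_one
  intro v
  show ‖mApp (1 - (dot yh yh)⁻¹ • outer yh yh) v‖ ≤ 1 * ‖v‖
  have happ : mApp (1 - (dot yh yh)⁻¹ • outer yh yh) v
      = v - ((dot yh yh)⁻¹ * dot yh v) • yh := by
    rw [mApp_sub, mApp_one, mApp_smulM, mApp_outer, smul_smul]
  rw [happ]
  have hsq : ‖v - ((dot yh yh)⁻¹ * dot yh v) • yh‖ ^ 2 ≤ ‖v‖ ^ 2 := by
    rw [norm_sq_eq_dot, norm_sq_eq_dot]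
    rw [dot_sub_left, dot_sub_right, dot_sub_right, dot_smul_left, dot_smul_left,
      dot_smul_right, dot_smul_right]
    rw [dot_comm v yh]
    have hexp : dot v v - (dot yh yh)⁻¹ * dot yh v * dot yh v -
        ((dot yh yh)⁻¹ * dot yh v * dot yh v -
          (dot yh yh)⁻¹ * dot yh v * ((dot yh yh)⁻¹ * dot yh v * dot yh yh)) =
        dot v v - (dot yh v) ^ 2 * (dot yh yh)⁻¹ := by
      field_simp
      ring
    rw [hexp]
    have : 0 ≤ (dot yh v) ^ 2 * (dot yh yh)⁻¹ := by positivity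
    linarith
  have h1 : ‖v - ((dot yh yh)⁻¹ * dot yh v) • yh‖ ≤ ‖v‖ := by
    nlinarith [norm_nonneg (v - ((dot yh yh)⁻¹ * dot yh v) • yh), norm_nonneg v]
  linarith

theorem sqrt_drop (a b δ x : ℝ) (hδ : 0 < δ) (ha0 : 0 ≤ a) (hb0 : 0 ≤ b)
    (hba : b ≤ a ^ 2) (haδ : a ≤ δ) (hx : x ≤ a ^ 2 - b) :
    Real.sqrt x ≤ a - b / (2 * δ) := by
  have hy2 : 0 ≤ a - b / (2 * δ) := by
    have h3 : b / (2 * δ) ≤ a ^ 2 / (2 * δ) := by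
      apply div_le_div_of_nonneg_right hba; positivity
    have h4 : a ^ 2 / (2 * δ) ≤ a / 2 := by
      rw [div_le_div_iff₀ (by positivity) (by norm_num)]
      nlinarith
    linarith
  rw [Real.sqrt_le_iff]
  refine ⟨hy2, ?_⟩
  have heq : (a - b / (2 * δ)) ^ 2 = a ^ 2 - a * b / δ + (b / (2 * δ)) ^ 2 := by
    field_simp; ring
  have h5 : a * b / δ ≤ b := by
    rw [div_le_iff₀ hδ]
    nlinarith
  nlinarith [sq_nonneg (b / (2 * δ))]

set_option maxHeartbeats 1000000 in
theorem frob_T0_le (B : Mat d) (hBsym : Bᵀ = B) (yh : E d) (hyh : yh ≠ 0)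
    (δ : ℝ) (hδ : 0 < δ) (hF : frob B ≤ δ) :
    frob (B - (dot yh yh)⁻¹ • outer yh (mApp B yh)
        - (dot yh yh)⁻¹ • outer (mApp B yh) yh
        + (dot yh (mApp B yh) * (dot yh yh)⁻¹ * (dot yh yh)⁻¹) • outer yh yh)
      ≤ frob B - ‖mApp B yh‖ ^ 2 / (2 * δ * ‖yh‖ ^ 2) := by
  have hn : 0 < dot yh yh := dot_self_pos yh hyh
  set n : ℝ := dot yh yh with hn'
  set w : E d := mApp B yh with hw
  set lam : ℝ := dot yh w with hlam
  have f1 : finp B (outer yh w) = dot w w := by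
    rw [finp_outer_right, dot_mApp_right, hBsym, ← hw, dot_comm]
  have f2 : finp B (outer w yh) = dot w w := by
    rw [finp_outer_right, ← hw]
  have f3 : finp B (outer yh yh) = lam := by
    rw [finp_outer_right, ← hw, hlam]
  set C : Mat d := n⁻¹ • outer yh w + n⁻¹ • outer w yh - (lam * n⁻¹ * n⁻¹) • outer yh yh
    with hC
  have hT0C : B - n⁻¹ • outer yh w - n⁻¹ • outer w yh + (lam * n⁻¹ * n⁻¹) • outer yh yh
      = B - C := by rw [hC]; abel
  have hBC : finp B C = 2 * (dot w w) * n⁻¹ - lam ^ 2 * n⁻¹ * n⁻¹ := by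
    rw [hC, finp_sub_right, finp_add_right, finp_smul_right, finp_smul_right,
      finp_smul_right, f1, f2, f3]
    ring
  have hCC : finp C C = 2 * (dot w w) * n⁻¹ - lam ^ 2 * n⁻¹ * n⁻¹ := by
    rw [hC]
    rw [finp_sub_left, finp_add_left]
    rw [finp_sub_right, finp_add_right, finp_sub_right, finp_add_right,
      finp_sub_right, finp_add_right]
    simp only [finp_smul_left, finp_smul_right, finp_outer_outer]
    rw [dot_comm w yh, ← hlam, ← hn']
    field_simp
    ring
  have hTT : finp (B - C) (B - C) = finp B B - 2 * (dot w w) * n⁻¹ + lam ^ 2 * n⁻¹ * n⁻¹ := by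
    rw [finp_sub_left B C (B - C), finp_sub_right B B C, finp_sub_right C B C,
      finp_comm C B, hBC, hCC]
    ring
  have hlam2 : lam ^ 2 ≤ n * dot w w := by
    have h := dot_cs yh w
    rw [← hlam, ← hn'] at h
    exact h
  have hww_nonneg : 0 ≤ dot w w := dot_self_nonneg w
  have hTT_le : finp (B - C) (B - C) ≤ frob B ^ 2 - (dot w w) * n⁻¹ := by
    rw [hTT, frob_sq]
    have h1 : lam ^ 2 * n⁻¹ * n⁻¹ ≤ (n * dot w w) * n⁻¹ * n⁻¹ := by
      apply mul_le_mul_of_nonneg_right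
      apply mul_le_mul_of_nonneg_right hlam2
      all_goals positivity
    have h2 : (n * dot w w) * n⁻¹ * n⁻¹ = dot w w * n⁻¹ := by field_simp
    linarith [h2 ▸ h1]
  have hb_le : dot w w * n⁻¹ ≤ frob B ^ 2 := by
    have h1 : ‖w‖ ≤ frob B * ‖yh‖ := norm_mApp_le_frob B yh
    have h2 : dot w w ≤ frob B ^ 2 * n := by
      have h3 : ‖w‖ ^ 2 ≤ (frob B * ‖yh‖) ^ 2 := by
        nlinarith [norm_nonneg w, frob_nonneg B, norm_nonneg yh]
      rw [norm_sq_eq_dot, mul_pow, norm_sq_eq_dot, ← hn'] at h3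
      exact h3
    calc dot w w * n⁻¹ ≤ (frob B ^ 2 * n) * n⁻¹ := by
          apply mul_le_mul_of_nonneg_right h2; positivity
      _ = frob B ^ 2 := by field_simp
  have hmain : frob (B - C) ≤ frob B - (dot w w * n⁻¹) / (2 * δ) := by
    rw [frob_eq_sqrt_finp]
    exact sqrt_drop (frob B) (dot w w * n⁻¹) δ _ hδ (frob_nonneg B) (by positivity)
      hb_le hF hTT_le
  rw [hT0C]
  have heq : (dot w w * n⁻¹) / (2 * δ) = ‖w‖ ^ 2 / (2 * δ * ‖yh‖ ^ 2) := by
    rw [norm_sq_eq_dot, norm_sq_eq_dot, ← hn']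
    field_simp
    try ring
    try exact Or.inl trivial
  rw [← heq]
  exact hmain

end BFGSAux
namespace BFGSAux
variable {d : ℕ}

theorem le_of_sq_le' (x y : ℝ) (hx : 0 ≤ x) (hy : 0 ≤ y) (h : x ^ 2 ≤ y ^ 2) : x ≤ y := by
  nlinarith

set_option maxHeartbeats 2000000 in
theorem core (Hh : Mat d) (hsym : Hhᵀ = Hh) (sh yh : E d) (τ δ : ℝ)
    (hδ : 0 < δ) (hτ0 : 0 ≤ τ) (hτ1 : τ < 1) (hsh : sh ≠ 0)
    (hclose : ‖yh - sh‖ ≤ τ * ‖sh‖) (hF : frob (Hh - 1) ≤ δ) :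
    frob (bfgsUpdate Hh sh yh - 1) ≤
      frob (Hh - 1) - ‖mApp (Hh - 1) yh‖ ^ 2 / (2 * δ * ‖yh‖ ^ 2)
        + (spec Hh * (4 / (1 - τ)) + spec Hh * (4 * (1 + τ) ^ 2 * τ / (1 - τ) ^ 2)
            + (3 + 2 * τ) / (1 - τ)) * τ := by
  have hns : 0 < ‖sh‖ := norm_pos_iff.mpr hsh
  have ha : dot sh sh = ‖sh‖ ^ 2 := (norm_sq_eq_dot sh).symm
  have ha0 : 0 < dot sh sh := by rw [ha]; positivity
  have hcge : (1 - τ) * dot sh sh ≤ dot yh sh := by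
    have h1 : dot sh yh = dot sh sh + dot sh (yh - sh) := by rw [dot_sub_right]; ring
    have h2 := abs_dot_le sh (yh - sh)
    have h3 : ‖sh‖ * ‖yh - sh‖ ≤ τ * ‖sh‖ ^ 2 := by nlinarith
    have h4 := abs_le.mp h2
    rw [dot_comm yh sh, h1, ha]
    nlinarith
  have hc : 0 < dot yh sh := lt_of_lt_of_le (by nlinarith) hcge
  have hyh : yh ≠ 0 := by
    intro h; rw [h, dot_zero_left] at hc; exact lt_irrefl 0 hc
  have hn : 0 < dot yh yh := dot_self_pos yh hyh
  set u : ℝ := 1 - τ with hu'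
  have hu : 0 < u := by rw [hu']; linarith
  set ρ : ℝ := τ / u with hρ'
  have hρ0 : 0 ≤ ρ := by positivity
  have hρu : ρ * u = τ := by rw [hρ']; field_simp
  -- the vector z and rank-one error factors
  set z : E d := (dot yh sh)⁻¹ • sh - (dot yh yh)⁻¹ • yh with hz
  have hdzz : dot z z = dot sh sh * (dot yh sh)⁻¹ * (dot yh sh)⁻¹ - (dot yh yh)⁻¹ := by
    rw [hz]
    simp only [dot_sub_left, dot_sub_right, dot_smul_left, dot_smul_right]
    rw [dot_comm sh yh]
    field_simp
    try ring
    try exact Or.inl trivial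
  have hee : ‖yh - sh‖ ^ 2 = dot yh yh - 2 * dot yh sh + dot sh sh := by
    rw [norm_sq_eq_dot, dot_sub_left, dot_sub_right, dot_sub_right, dot_comm sh yh]
    ring
  have hkey : dot z z * dot yh yh * (dot yh sh) ^ 2 ≤ τ ^ 2 * (dot sh sh) ^ 2 := by
    have h5 : dot z z * dot yh yh * (dot yh sh) ^ 2
        = dot sh sh * dot yh yh - (dot yh sh) ^ 2 := by
      rw [hdzz]; field_simp
    have h6 : dot sh sh * dot yh yh - (dot yh sh) ^ 2 ≤ dot sh sh * ‖yh - sh‖ ^ 2 := by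
      rw [hee]; nlinarith [sq_nonneg (dot sh sh - dot yh sh)]
    have h7 : dot sh sh * ‖yh - sh‖ ^ 2 ≤ τ ^ 2 * (dot sh sh) ^ 2 := by
      have : ‖yh - sh‖ ^ 2 ≤ τ ^ 2 * ‖sh‖ ^ 2 := by nlinarith [norm_nonneg (yh - sh)]
      rw [ha]
      nlinarith [sq_nonneg ‖sh‖]
    linarith [h5 ▸ le_trans h6 h7]
  have hρsq : dot z z * dot yh yh ≤ ρ ^ 2 := by
    have hc2 : u ^ 2 * (dot sh sh) ^ 2 ≤ (dot yh sh) ^ 2 := by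
      have h15 := mul_le_mul hcge hcge (le_of_lt (mul_pos hu ha0)) (le_of_lt hc)
      nlinarith
    have h9 : ρ ^ 2 * u ^ 2 = τ ^ 2 := by rw [← hρu]; ring
    have h8 : τ ^ 2 * (dot sh sh) ^ 2 ≤ ρ ^ 2 * (dot yh sh) ^ 2 := by
      nlinarith [sq_nonneg ρ]
    have hcc : 0 < (dot yh sh) ^ 2 := by positivity
    exact (mul_le_mul_iff_of_pos_right hcc).mp (by nlinarith [hkey, h8])
  have hfrobR : frob (outer z yh) ≤ ρ := by
    rw [frob_outer]
    apply le_of_sq_le' _ _ (by positivity) hρ0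
    rw [mul_pow, norm_sq_eq_dot, norm_sq_eq_dot]
    exact hρsq
  have hfrobR' : frob (outer yh z) ≤ ρ := by
    rw [frob_outer]
    apply le_of_sq_le' _ _ (by positivity) hρ0
    rw [mul_pow, norm_sq_eq_dot, norm_sq_eq_dot]
    nlinarith [hρsq]
  -- rank-one rewrites
  have hRz : (dot yh sh)⁻¹ • outer sh yh - (dot yh yh)⁻¹ • outer yh yh = outer z yh := by
    rw [hz, outer_sub_left, outer_smul_left, outer_smul_left]
  have hR'z : (dot yh sh)⁻¹ • outer yh sh - (dot yh yh)⁻¹ • outer yh yh = outer yh z := by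
    rw [hz, outer_sub_right, outer_smul_right, outer_smul_right]
  -- spec of projector
  have hproj : spec (1 - (dot yh yh)⁻¹ • outer yh yh) ≤ 1 := spec_proj_le_one yh hyh
  have hS : 0 ≤ spec Hh := spec_nonneg Hh
  -- E1 bound
  have hE1a : frob ((1 - (dot yh yh)⁻¹ • outer yh yh) * Hh * outer yh z) ≤ spec Hh * ρ := by
    rw [mul_assoc]
    calc frob ((1 - (dot yh yh)⁻¹ • outer yh yh) * (Hh * outer yh z))
        ≤ spec (1 - (dot yh yh)⁻¹ • outer yh yh) * frob (Hh * outer yh z) :=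
          frob_mul_le_left _ _
      _ ≤ 1 * frob (Hh * outer yh z) := by
          apply mul_le_mul_of_nonneg_right hproj (frob_nonneg _)
      _ = frob (Hh * outer yh z) := one_mul _
      _ ≤ spec Hh * frob (outer yh z) := frob_mul_le_left _ _
      _ ≤ spec Hh * ρ := by
          apply mul_le_mul_of_nonneg_left hfrobR' hS
  have hRH : frob (outer z yh * Hh) ≤ ρ * spec Hh := by
    calc frob (outer z yh * Hh) ≤ frob (outer z yh) * spec Hh := frob_mul_le_right _ _
      _ ≤ ρ * spec Hh := by apply mul_le_mul_of_nonneg_right hfrobR hS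
  have hE1b : frob (outer z yh * Hh * (1 - (dot yh yh)⁻¹ • outer yh yh)) ≤ ρ * spec Hh := by
    calc frob (outer z yh * Hh * (1 - (dot yh yh)⁻¹ • outer yh yh))
        ≤ frob (outer z yh * Hh) * spec (1 - (dot yh yh)⁻¹ • outer yh yh) :=
          frob_mul_le_right _ _
      _ ≤ frob (outer z yh * Hh) * 1 := by
          apply mul_le_mul_of_nonneg_left hproj (frob_nonneg _)
      _ = frob (outer z yh * Hh) := mul_one _
      _ ≤ ρ * spec Hh := hRH
  have hE1c : frob (outer z yh * Hh * outer yh z) ≤ ρ * spec Hh * ρ := by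
    calc frob (outer z yh * Hh * outer yh z)
        ≤ frob (outer z yh * Hh) * spec (outer yh z) := frob_mul_le_right _ _
      _ ≤ frob (outer z yh * Hh) * frob (outer yh z) := by
          apply mul_le_mul_of_nonneg_left (spec_le_frob _) (frob_nonneg _)
      _ ≤ (ρ * spec Hh) * ρ := by
          apply mul_le_mul hRH hfrobR' (frob_nonneg _) (by positivity)
  -- E2 bound
  have hE2eq : (dot yh sh)⁻¹ • outer sh sh - (dot yh yh)⁻¹ • outer yh yh
      = (dot yh sh)⁻¹ • outer (sh - yh) sh + outer yh z := by
    rw [outer_sub_left, smul_sub, ← hR'z]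
    abel
  have hE2 : frob ((dot yh sh)⁻¹ • outer sh sh - (dot yh yh)⁻¹ • outer yh yh) ≤ 2 * ρ := by
    rw [hE2eq]
    have h10 : frob ((dot yh sh)⁻¹ • outer (sh - yh) sh) ≤ ρ := by
      rw [frob_smul, frob_outer, abs_of_pos (by positivity : (0:ℝ) < (dot yh sh)⁻¹)]
      have h11 : ‖sh - yh‖ = ‖yh - sh‖ := norm_sub_rev _ _
      have h12 : (dot yh sh)⁻¹ * (‖sh - yh‖ * ‖sh‖) ≤ (dot yh sh)⁻¹ * (τ * ‖sh‖ ^ 2) := by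
        apply mul_le_mul_of_nonneg_left _ (by positivity)
        rw [h11]; nlinarith
      have h13 : (dot yh sh)⁻¹ * (τ * ‖sh‖ ^ 2) ≤ ρ := by
        rw [← ha, inv_mul_le_iff₀ hc]
        have h14 : u * dot sh sh * ρ = τ * dot sh sh := by
          calc u * dot sh sh * ρ = dot sh sh * (ρ * u) := by ring
            _ = dot sh sh * τ := by rw [hρu]
            _ = τ * dot sh sh := by ring
        have h15 := mul_le_mul_of_nonneg_right hcge hρ0
        linarith
      linarith
    calc frob ((dot yh sh)⁻¹ • outer (sh - yh) sh + outer yh z)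
        ≤ frob ((dot yh sh)⁻¹ • outer (sh - yh) sh) + frob (outer yh z) := frob_triangle _ _
      _ ≤ ρ + ρ := add_le_add h10 hfrobR'
      _ = 2 * ρ := by ring
  -- assemble
  rw [bfgs_identity Hh hsym sh yh hc.ne' hn.ne', hRz, hR'z]
  have tri : ∀ X Y Z : Mat d, frob (X + Y + Z) ≤ frob X + frob Y + frob Z := by
    intro X Y Z
    calc frob (X + Y + Z) ≤ frob (X + Y) + frob Z := frob_triangle _ _
      _ ≤ frob X + frob Y + frob Z := by linarith [frob_triangle X Y]
  have triE1 : ∀ X Y Z : Mat d, frob (-X - Y + Z) ≤ frob X + frob Y + frob Z := by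
    intro X Y Z
    have h := tri (-X) (-Y) Z
    rw [frob_neg, frob_neg] at h
    calc frob (-X - Y + Z) = frob (-X + -Y + Z) := by rw [sub_eq_add_neg]
      _ ≤ frob X + frob Y + frob Z := h
  have hT0 := frob_T0_le (Hh - 1) (by rw [Matrix.transpose_sub, Matrix.transpose_one, hsym])
    yh hyh δ hδ hF
  have hE1 : frob (-((1 - (dot yh yh)⁻¹ • outer yh yh) * Hh * outer yh z)
      - outer z yh * Hh * (1 - (dot yh yh)⁻¹ • outer yh yh)
      + outer z yh * Hh * outer yh z) ≤ spec Hh * ρ + ρ * spec Hh + ρ * spec Hh * ρ := by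
    calc frob _ ≤ _ := triE1 _ _ _
      _ ≤ spec Hh * ρ + ρ * spec Hh + ρ * spec Hh * ρ := by
          exact add_le_add (add_le_add hE1a hE1b) hE1c
  have hfinal := le_trans (tri _ _ _) (add_le_add (add_le_add hT0 hE1) hE2)
  refine le_trans hfinal ?_
  have hRHSeq : (spec Hh * (4 / (1 - τ)) + spec Hh * (4 * (1 + τ) ^ 2 * τ / (1 - τ) ^ 2)
      + (3 + 2 * τ) / (1 - τ)) * τ
      = 4 * spec Hh * ρ + 4 * spec Hh * (1 + τ) ^ 2 * ρ ^ 2 + (3 + 2 * τ) * ρ := by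
    rw [hρ', hu']
    field_simp
  rw [hRHSeq]
  have hτρ : τ ≤ ρ ∨ True := Or.inr trivial
  nlinarith [mul_nonneg hS hρ0, mul_nonneg (mul_nonneg hS hρ0) hρ0,
    mul_nonneg (mul_nonneg (mul_nonneg hS hρ0) hρ0) hτ0, mul_nonneg hρ0 hτ0,
    sq_nonneg (1 + τ), mul_nonneg (mul_nonneg hS (sq_nonneg (1 + τ))) (sq_nonneg ρ)]

end BFGSAux
namespace BFGSAux
variable {d : ℕ}

set_option maxHeartbeats 1000000 in
theorem hat_identity (A Hk : Mat d) (hA : Aᵀ = A) (hAinv : A * A⁻¹ = 1)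
    (hAinv' : A⁻¹ * A = 1) (s y : E d) :
    A * bfgsUpdate Hk s y * A = bfgsUpdate (A * Hk * A) (mApp A s) (mApp A⁻¹ y) := by
  have hA'T : (A⁻¹)ᵀ = A⁻¹ := by rw [Matrix.transpose_nonsing_inv, hA]
  have hyy : mApp A (mApp A⁻¹ y) = y := by rw [← mApp_mul, hAinv, mApp_one]
  have hdot1 : dot (mApp A⁻¹ y) (mApp A s) = dot y s := by
    rw [dot_mApp_left, hA'T, ← mApp_mul, hAinv', mApp_one]
  have hdot2 : dot (mApp A s) (mApp A⁻¹ y) = dot s y := by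
    rw [dot_comm, hdot1, dot_comm]
  have e1 : A * (1 - (dot y s)⁻¹ • outer s y)
      = (1 - (dot y s)⁻¹ • outer (mApp A s) (mApp A⁻¹ y)) * A := by
    rw [mul_sub, sub_mul, mul_one, one_mul, Matrix.mul_smul, Matrix.smul_mul,
      mul_outer, outer_mul, hA, hyy]
  have e2 : (1 - (dot s y)⁻¹ • outer y s) * A
      = A * (1 - (dot s y)⁻¹ • outer (mApp A⁻¹ y) (mApp A s)) := by
    rw [sub_mul, mul_sub, mul_one, one_mul, Matrix.smul_mul, Matrix.mul_smul,
      outer_mul, mul_outer, hA, hyy]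
  have e3 : A * outer s s * A = outer (mApp A s) (mApp A s) := by
    rw [mul_outer, outer_mul, hA]
  rw [bfgsUpdate, bfgsUpdate, hdot1, hdot2]
  rw [Matrix.mul_add, Matrix.add_mul, Matrix.mul_smul, Matrix.smul_mul, e3]
  congr 1
  calc A * ((1 - (dot y s)⁻¹ • outer s y) * Hk * (1 - (dot s y)⁻¹ • outer y s)) * A
      = (A * (1 - (dot y s)⁻¹ • outer s y)) * Hk * ((1 - (dot s y)⁻¹ • outer y s) * A) := by
        noncomm_ring
    _ = ((1 - (dot y s)⁻¹ • outer (mApp A s) (mApp A⁻¹ y)) * A) * Hk *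
          (A * (1 - (dot s y)⁻¹ • outer (mApp A⁻¹ y) (mApp A s))) := by rw [e1, e2]
    _ = (1 - (dot y s)⁻¹ • outer (mApp A s) (mApp A⁻¹ y)) * (A * Hk * A) *
          (1 - (dot s y)⁻¹ • outer (mApp A⁻¹ y) (mApp A s)) := by noncomm_ring

end BFGSAux
namespace BFGSAux
variable {d : ℕ}

theorem mul_max_nonneg (k x y : ℝ) (hk : 0 ≤ k) : max (k * x) (k * y) = k * max x y := by
  rcases le_total x y with h | h
  · rw [max_eq_right h, max_eq_right (mul_le_mul_of_nonneg_left h hk)]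
  · rw [max_eq_left h, max_eq_left (mul_le_mul_of_nonneg_left h hk)]

set_option maxHeartbeats 1000000 in
theorem hat_close
    (g : E d → E d) (Hess : E d → Mat d) (xs : E d) (μ M : ℝ) (hμ : 0 < μ) (hM : 0 < M)
    (hHd : ∀ x, HasFDerivAt g (Matrix.toEuclideanCLM (𝕜 := ℝ) (Hess x)) x)
    (hLip : ∀ x, spec (Hess x - Hess xs) ≤ M * ‖x - xs‖)
    (A : Mat d) (hA : Aᵀ = A) (hAinv : A * A⁻¹ = 1) (hAinv' : A⁻¹ * A = 1)
    (hA2 : A * A = Hess xs)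
    (hL1 : ∀ v : E d, Real.sqrt μ * ‖v‖ ≤ ‖mApp A v‖)
    (xk xk1 : E d) :
    ‖mApp A⁻¹ (g xk1 - g xk) - mApp A (xk1 - xk)‖ ≤
      tauP M μ A xs xk xk1 * ‖mApp A (xk1 - xk)‖ := by
  have hsμ : 0 < Real.sqrt μ := Real.sqrt_pos.mpr hμ
  have hL2 : ∀ v : E d, ‖mApp A⁻¹ v‖ ≤ (Real.sqrt μ)⁻¹ * ‖v‖ := by
    intro v
    have h := hL1 (mApp A⁻¹ v)
    rw [← mApp_mul, hAinv, mApp_one] at h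
    rw [← div_eq_inv_mul, le_div_iff₀ hsμ, mul_comm]
    exact h
  set s : E d := xk1 - xk with hs'
  set ρm : ℝ := max ‖mApp A (xk - xs)‖ ‖mApp A (xk1 - xs)‖ with hρm'
  have hρm0 : 0 ≤ ρm := le_max_of_le_left (norm_nonneg _)
  have hμ32 : μ ^ ((3:ℝ)/2) = Real.sqrt μ ^ 3 := by
    rw [Real.sqrt_eq_rpow, ← Real.rpow_natCast (μ ^ ((1:ℝ)/2)) 3, ← Real.rpow_mul hμ.le]
    norm_num
  have htau : tauP M μ A xs xk xk1 = M / μ ^ ((3:ℝ)/2) * ρm := by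
    rw [tauP, sig, sig, hρm', mul_max_nonneg _ _ _ (by positivity)]
  set C : ℝ := M / μ ^ ((3:ℝ)/2) * ρm * ‖mApp A s‖ with hC'
  set φ : ℝ → E d := fun t => mApp A⁻¹ (g (xk + t • s)) - t • mApp A s with hφ'
  have hderiv : ∀ t : ℝ,
      HasDerivAt φ (mApp A⁻¹ (mApp (Hess (xk + t • s)) s) - mApp A s) t := by
    intro t
    have h1 : HasDerivAt (fun t : ℝ => xk + t • s) s t := by
      simpa using ((hasDerivAt_id t).smul_const s).const_add xk
    have h2 := (hHd (xk + t • s)).comp_hasDerivAt t h1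
    have h3 := (Matrix.toEuclideanCLM (𝕜 := ℝ) A⁻¹).hasFDerivAt.comp_hasDerivAt t h2
    have h4 : HasDerivAt (fun t : ℝ => t • mApp A s) (mApp A s) t := by
      simpa using (hasDerivAt_id t).smul_const (mApp A s)
    exact h3.sub h4
  have hbound : ∀ t ∈ Set.Icc (0:ℝ) 1,
      ‖mApp A⁻¹ (mApp (Hess (xk + t • s)) s) - mApp A s‖ ≤ C := by
    intro t ht
    have hrw : mApp A⁻¹ (mApp (Hess (xk + t • s)) s) - mApp A s
        = mApp A⁻¹ (mApp (Hess (xk + t • s) - Hess xs) s) := by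
      rw [mApp_sub (Hess (xk + t • s)) (Hess xs) s,
        mApp_vsub A⁻¹ (mApp (Hess (xk + t • s)) s) (mApp (Hess xs) s)]
      congr 1
      rw [← hA2, ← mApp_mul A⁻¹ (A * A) s, ← mul_assoc, hAinv', one_mul]
    rw [hrw]
    have hconv : mApp A ((xk + t • s) - xs)
        = (1 - t) • mApp A (xk - xs) + t • mApp A (xk1 - xs) := by
      have harg : (xk + t • s) - xs = (1 - t) • (xk - xs) + t • (xk1 - xs) := by
        rw [hs']; module
      rw [harg, mApp_vadd, mApp_vsmul, mApp_vsmul]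
    have hxt : ‖mApp A ((xk + t • s) - xs)‖ ≤ ρm := by
      rw [hconv]
      calc ‖(1 - t) • mApp A (xk - xs) + t • mApp A (xk1 - xs)‖
          ≤ ‖(1 - t) • mApp A (xk - xs)‖ + ‖t • mApp A (xk1 - xs)‖ := norm_add_le _ _
        _ = (1 - t) * ‖mApp A (xk - xs)‖ + t * ‖mApp A (xk1 - xs)‖ := by
            rw [norm_smul, norm_smul, Real.norm_eq_abs, Real.norm_eq_abs,
              abs_of_nonneg (by linarith [ht.2]), abs_of_nonneg ht.1]
        _ ≤ (1 - t) * ρm + t * ρm := by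
            have h5 : ‖mApp A (xk - xs)‖ ≤ ρm := le_max_left _ _
            have h6 : ‖mApp A (xk1 - xs)‖ ≤ ρm := le_max_right _ _
            have ht1 : 0 ≤ 1 - t := by linarith [ht.2]
            have ht0 : 0 ≤ t := ht.1
            nlinarith
        _ = ρm := by ring
    have hx : ‖(xk + t • s) - xs‖ ≤ (Real.sqrt μ)⁻¹ * ρm := by
      have h7 := hL1 ((xk + t • s) - xs)
      rw [inv_mul_eq_div, le_div_iff₀ hsμ]
      calc ‖(xk + t • s) - xs‖ * Real.sqrt μ = Real.sqrt μ * ‖(xk + t • s) - xs‖ := by ring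
        _ ≤ ‖mApp A ((xk + t • s) - xs)‖ := h7
        _ ≤ ρm := hxt
    have hns : ‖s‖ ≤ (Real.sqrt μ)⁻¹ * ‖mApp A s‖ := by
      have h8 := hL1 s
      rw [inv_mul_eq_div, le_div_iff₀ hsμ]
      linarith [h8]
    have hspec : spec (Hess (xk + t • s) - Hess xs) ≤ M * ((Real.sqrt μ)⁻¹ * ρm) := by
      calc spec (Hess (xk + t • s) - Hess xs) ≤ M * ‖(xk + t • s) - xs‖ := hLip _
        _ ≤ M * ((Real.sqrt μ)⁻¹ * ρm) := by
            apply mul_le_mul_of_nonneg_left hx hM.le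
    calc ‖mApp A⁻¹ (mApp (Hess (xk + t • s) - Hess xs) s)‖
        ≤ (Real.sqrt μ)⁻¹ * ‖mApp (Hess (xk + t • s) - Hess xs) s‖ := hL2 _
      _ ≤ (Real.sqrt μ)⁻¹ * (spec (Hess (xk + t • s) - Hess xs) * ‖s‖) := by
          apply mul_le_mul_of_nonneg_left (norm_mApp_le _ _) (by positivity)
      _ ≤ (Real.sqrt μ)⁻¹ * ((M * ((Real.sqrt μ)⁻¹ * ρm)) * ((Real.sqrt μ)⁻¹ * ‖mApp A s‖)) := by
          apply mul_le_mul_of_nonneg_left _ (by positivity)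
          apply mul_le_mul hspec hns (norm_nonneg _)
          positivity
      _ = C := by
          rw [hC', hμ32]
          field_simp
  have hmvt := Convex.norm_image_sub_le_of_norm_hasDerivWithin_le
    (f := φ) (f' := fun t => mApp A⁻¹ (mApp (Hess (xk + t • s)) s) - mApp A s)
    (s := Set.Icc (0:ℝ) 1) (C := C)
    (fun t _ => (hderiv t).hasDerivWithinAt) hbound (convex_Icc 0 1)
    (Set.left_mem_Icc.mpr zero_le_one) (Set.right_mem_Icc.mpr zero_le_one)
  have hφ1 : φ 1 - φ 0 = mApp A⁻¹ (g xk1 - g xk) - mApp A s := by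
    rw [hφ']
    simp only [one_smul, zero_smul, sub_zero, add_zero]
    rw [hs']
    have h1 : xk + (xk1 - xk) = xk1 := by abel
    rw [h1, mApp_vsub A⁻¹ (g xk1) (g xk)]
    abel
  rw [hφ1] at hmvt
  have : ‖(1:ℝ) - 0‖ = 1 := by norm_num
  rw [this, mul_one] at hmvt
  rw [htau]
  exact hmvt

end BFGSAux

open BFGSAux in
set_option maxHeartbeats 1000000 in
theorem bfgs_potential_decrease
    {d : ℕ}
    (f : E d → ℝ) (g : E d → E d) (Hess : E d → Mat d) (xs : E d)
    (μ L M : ℝ) (hμ : 0 < μ) (hμL : μ ≤ L) (hM : 0 < M)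
    -- `g` is the gradient of `f`, and `Hess` its Hessian (so `f` is twice differentiable)
    (hg : ∀ x, HasGradientAt f (g x) x)
    (hHd : ∀ x, HasFDerivAt g (Matrix.toEuclideanCLM (𝕜 := ℝ) (Hess x)) x)
    -- `xs` is the unique minimizer of `f`
    (hmin : ∀ x, f xs ≤ f x)
    (huniq : ∀ x, (∀ y, f x ≤ f y) → x = xs)
    -- Assumption 1: strong convexity and gradient Lipschitz continuity
    (hgl : ∀ x y, μ * ‖x - y‖ ≤ ‖g x - g y‖)
    (hgu : ∀ x y, ‖g x - g y‖ ≤ L * ‖x - y‖)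
    (hHl : ∀ x v, μ * ‖v‖ ^ 2 ≤ dot v (mApp (Hess x) v))
    (hHu : ∀ x v, dot v (mApp (Hess x) v) ≤ L * ‖v‖ ^ 2)
    -- Assumption 2: Hessian Lipschitz continuity toward the optimum
    (hLip : ∀ x, spec (Hess x - Hess xs) ≤ M * ‖x - xs‖)
    -- `sqH` is the positive definite square root `H_*^{1/2}` of `H_* = ∇²f(x_*)`
    (sqH : Mat d) (hsqH : sqH.PosDef) (hsqH2 : sqH * sqH = Hess xs)
    (δ : ℝ) (hδ : 0 < δ)
    -- one step of the BFGS method: current iterate `xk`, inverse Hessian approximation `Hk`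
    (xk xk1 : E d) (Hk : Mat d) (hHkpd : Hk.PosDef)
    (hxk1 : xk1 = xk - mApp Hk (g xk))
    (hs : xk1 - xk ≠ 0)
    (hτ : tauP M μ sqH xs xk xk1 < 1)
    (hH : frob (sqH * Hk * sqH - 1) ≤ δ) :
    frob (sqH * bfgsUpdate Hk (xk1 - xk) (g xk1 - g xk) * sqH - 1) ≤
      frob (sqH * Hk * sqH - 1)
        - ‖mApp (sqH * Hk * sqH - 1) (mApp sqH⁻¹ (g xk1 - g xk))‖ ^ 2
            / (2 * δ * ‖mApp sqH⁻¹ (g xk1 - g xk)‖ ^ 2)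
        + (spec (sqH * Hk * sqH) * (4 / (1 - tauP M μ sqH xs xk xk1))
            + spec (sqH * Hk * sqH) *
                (4 * (1 + tauP M μ sqH xs xk xk1) ^ 2 * tauP M μ sqH xs xk xk1
                  / (1 - tauP M μ sqH xs xk xk1) ^ 2)
            + (3 + 2 * tauP M μ sqH xs xk xk1) / (1 - tauP M μ sqH xs xk xk1))
          * tauP M μ sqH xs xk xk1 := by
  have hdet : IsUnit sqH.det := isUnit_iff_ne_zero.mpr (ne_of_gt hsqH.det_pos)
  have hAinv : sqH * sqH⁻¹ = 1 := Matrix.mul_nonsing_inv _ hdet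
  have hAinv' : sqH⁻¹ * sqH = 1 := Matrix.nonsing_inv_mul _ hdet
  have hAsym : sqHᵀ = sqH := by
    rw [transpose_eq_conjTranspose]
    exact hsqH.1
  have hL1 : ∀ v : E d, Real.sqrt μ * ‖v‖ ≤ ‖mApp sqH v‖ := by
    intro v
    have h1 : μ * ‖v‖ ^ 2 ≤ dot v (mApp (Hess xs) v) := hHl xs v
    have h2 : dot (mApp sqH v) (mApp sqH v) = dot v (mApp (Hess xs) v) := by
      rw [dot_mApp_left, hAsym, ← mApp_mul, hsqH2]
    apply le_of_sq_le' _ _ (by positivity) (norm_nonneg _)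
    rw [mul_pow, norm_sq_eq_dot (mApp sqH v), h2, Real.sq_sqrt hμ.le, norm_sq_eq_dot v] at *
    nlinarith [hHl xs v, norm_sq_eq_dot v]
  have hτ0 : 0 ≤ tauP M μ sqH xs xk xk1 := by
    have : 0 ≤ sig M μ sqH xs xk := by
      rw [sig]
      have h3 : (0:ℝ) ≤ M / μ ^ ((3:ℝ)/2) := by positivity
      positivity
    exact le_trans this (le_max_left _ _)
  have hsh : mApp sqH (xk1 - xk) ≠ 0 := by
    intro h0
    apply hs
    have h4 := hL1 (xk1 - xk)
    rw [h0, norm_zero] at h4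
    have h5 : ‖xk1 - xk‖ = 0 := by
      have hsμ : 0 < Real.sqrt μ := Real.sqrt_pos.mpr hμ
      nlinarith [norm_nonneg (xk1 - xk)]
    exact norm_eq_zero.mp h5
  have hclose := hat_close g Hess xs μ M hμ hM hHd hLip sqH hAsym hAinv hAinv' hsqH2 hL1 xk xk1
  have hHksym : Hkᵀ = Hk := by
    rw [transpose_eq_conjTranspose]
    exact hHkpd.1
  have hsymH : (sqH * Hk * sqH)ᵀ = sqH * Hk * sqH := by
    rw [Matrix.transpose_mul, Matrix.transpose_mul, hAsym, hHksym, mul_assoc]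
  rw [hat_identity sqH Hk hAsym hAinv hAinv' (xk1 - xk) (g xk1 - g xk)]
  exact core (sqH * Hk * sqH) hsymH (mApp sqH (xk1 - xk)) (mApp sqH⁻¹ (g xk1 - g xk))
    (tauP M μ sqH xs xk xk1) δ hδ hτ0 hτ hsh hclose hH
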